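/- Let T, the constants, and a gadget system satisfying (G1)–(G9) be as in the context. Let D₁ ⊆ A₁, let μ ∈ {+,−}, let θ₁ ≤ φ₁ and set θ₂ := θ₁/(2^7 ρ). For each α ∈ D₁, s ∈ S(α) and ν ∈ {+,−}, let M^ν(s) be a subset of V_okay of size at least θ₁kt. Then there is a subset D₂ ⊆ D₁ of size at least |D₁|/(36ρ²) such that for every α ∈ D₂, every s ∈ S(α) and every ν ∈ {+,−}, there are at least θ₂kt vertices u ∈ M^ν(s) with |N^μ_good(u) ∩ W(D₂ ∖ {α})| ≥ θ₂kt. -/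

import Mathlib

open Finset

namespace TournamentPartition

/-! ### Basic constants from the paper -/

def rho : ℕ := 10 ^ 4
def sigma1 : ℕ := 10 ^ 60
def sigma2 : ℕ := 10 ^ 4
def sigma3 : ℕ := 10

/-- `s` contains at least `m` elements satisfying `P`. -/
def ManyIn {α : Type*} (s : Finset α) (m : ℝ) (P : α → Prop) : Prop :=
  ∃ s' : Finset α, s' ⊆ s ∧ m ≤ (s'.card : ℝ) ∧ ∀ x ∈ s', P x

section Defs

variable {V I : Type*}

/-- `E u v` means that the edge between `u` and `v` is directed from `u` to `v`. -/
def IsTournament (E : V → V → Prop) : Prop :=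
  (∀ v, ¬ E v v) ∧ ∀ u v : V, u ≠ v → (E u v ↔ ¬ E v u)

/-- There is a directed path from `u` to `v` all of whose vertices lie in `S`. -/
def ReachWithin (E : V → V → Prop) (S : Set V) (u v : V) : Prop :=
  Relation.ReflTransGen (fun a b => a ∈ S ∧ b ∈ S ∧ E a b) u v

def StronglyConnectedOn (E : V → V → Prop) (S : Set V) : Prop :=
  ∀ u ∈ S, ∀ v ∈ S, ReachWithin E S u v

/-- A directed path, as a list of distinct vertices with consecutive edges. -/
def IsDiPath (E : V → V → Prop) (l : List V) : Prop :=
  l ≠ [] ∧ l.Nodup ∧ l.Chain' E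

variable [Fintype V] [DecidableEq V]

/-- The set `S` induces a strongly `k`-connected subtournament. -/
def StronglyKConnectedOn (E : V → V → Prop) (k : ℕ) (S : Finset V) : Prop :=
  k + 1 ≤ S.card ∧
    ∀ Z : Finset V, Z.card ≤ k → StronglyConnectedOn E ((S \ Z : Finset V) : Set V)

def StronglyKConnected (E : V → V → Prop) (k : ℕ) : Prop :=
  StronglyKConnectedOn E k Finset.univ

def outN (E : V → V → Prop) [DecidableRel E] (u : V) : Finset V :=
  Finset.univ.filter fun v => E u v

def inN (E : V → V → Prop) [DecidableRel E] (u : V) : Finset V :=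
  Finset.univ.filter fun v => E v u

/-- A system of gadgets `U(α)` with special sets `S⁺(α), S⁻(α) ⊆ S(α) ⊆ U(α)`,
exceptional sets `X(α)` and special vertices `s⁺(α), s⁻(α) ∈ S(α)`. -/
structure GadgetSystem (V I : Type*) where
  U : I → Finset V
  S : I → Finset V
  Sp : I → Finset V
  Sm : I → Finset V
  X : I → Finset V
  sp : I → V
  sm : I → V
  sp_mem : ∀ α, sp α ∈ S α
  sm_mem : ∀ α, sm α ∈ S α
  Sp_subset : ∀ α, Sp α ⊆ S α
  Sm_subset : ∀ α, Sm α ⊆ S α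
  S_subset : ∀ α, S α ⊆ U α

variable [Fintype I] [DecidableEq I]

def Vokay (G : GadgetSystem V I) : Finset V :=
  Finset.univ \ Finset.univ.biUnion G.S

/-- Vertices of `V_okay` having no out-neighbour in `S⁻(α)` for at least `k*t` indices `α`. -/
def VbadP (E : V → V → Prop) [DecidableRel E] (G : GadgetSystem V I) (k t : ℕ) : Finset V :=
  (Vokay G).filter fun u =>
    k * t ≤ (Finset.univ.filter fun α : I => ∀ v ∈ G.Sm α, ¬ E u v).card

/-- Vertices of `V_okay` having no in-neighbour in `S⁺(α)` for at least `k*t` indices `α`. -/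
def VbadM (E : V → V → Prop) [DecidableRel E] (G : GadgetSystem V I) (k t : ℕ) : Finset V :=
  (Vokay G).filter fun u =>
    k * t ≤ (Finset.univ.filter fun α : I => ∀ v ∈ G.Sp α, ¬ E v u).card

def Vbad (E : V → V → Prop) [DecidableRel E] (G : GadgetSystem V I) (k t : ℕ) : Finset V :=
  VbadP E G k t ∩ VbadM E G k t

def VgoodP (E : V → V → Prop) [DecidableRel E] (G : GadgetSystem V I) (k t : ℕ) : Finset V :=
  Vokay G \ VbadP E G k t

def VgoodM (E : V → V → Prop) [DecidableRel E] (G : GadgetSystem V I) (k t : ℕ) : Finset V :=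
  Vokay G \ VbadM E G k t

def Vgood (E : V → V → Prop) [DecidableRel E] (G : GadgetSystem V I) (k t : ℕ) : Finset V :=
  VgoodP E G k t ∩ VgoodM E G k t

/-- `W(C) = V ∖ ⋃_{α ∈ C} U(α)`. -/
def Wof (G : GadgetSystem V I) (C : Finset I) : Finset V :=
  Finset.univ \ C.biUnion G.U

def NokayP (E : V → V → Prop) [DecidableRel E] (G : GadgetSystem V I) (u : V) : Finset V :=
  outN E u ∩ Vokay G

def NokayM (E : V → V → Prop) [DecidableRel E] (G : GadgetSystem V I) (u : V) : Finset V :=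
  inN E u ∩ Vokay G

def NgoodP (E : V → V → Prop) [DecidableRel E] (G : GadgetSystem V I) (k t : ℕ) (u : V) :
    Finset V :=
  outN E u ∩ VgoodP E G k t

def NgoodM (E : V → V → Prop) [DecidableRel E] (G : GadgetSystem V I) (k t : ℕ) (u : V) :
    Finset V :=
  inN E u ∩ Vgood E G k t

/-! ### Properties (G1)–(G9) -/

def CondG1 (G : GadgetSystem V I) : Prop :=
  ∀ α β : I, α ≠ β → Disjoint (G.U α) (G.U β)

def CondG2 (G : GadgetSystem V I) (k t : ℕ) : Prop :=
  ∀ α : I, (G.S α).card ≤ rho ∧ (G.X α).card ≤ rho * sigma1 * k * t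

def CondG3 (E : V → V → Prop) (G : GadgetSystem V I) : Prop :=
  ∀ α : I, ∀ u ∈ G.Sm α, ∀ v ∈ G.Sp α, ReachWithin E (G.U α : Set V) u v

def CondG4 (E : V → V → Prop) (G : GadgetSystem V I) : Prop :=
  ∀ α : I, ∀ x : V, x ∉ G.X α →
    (E x (G.sp α) → ∀ u ∈ G.U α \ G.S α, E x u) ∧
    (E (G.sm α) x → ∀ u ∈ G.U α \ G.S α, E u x)

def CondG5 (E : V → V → Prop) [DecidableRel E] (G : GadgetSystem V I) (k t : ℕ) : Prop :=
  ∀ u ∈ Vokay G,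
    10 ^ 12 * (VbadP E G k t).card ≤ (outN E u).card ∧
    10 ^ 12 * (VbadM E G k t).card ≤ (inN E u).card

/-- Properties (G1)–(G5) of a gadget system. -/
def GadgetHyp (E : V → V → Prop) [DecidableRel E] (G : GadgetSystem V I) (k t : ℕ) : Prop :=
  CondG1 G ∧ CondG2 G k t ∧ CondG3 E G ∧ CondG4 E G ∧ CondG5 E G k t

def CondG6 (E : V → V → Prop) [DecidableRel E] (G : GadgetSystem V I) (k t : ℕ) : Prop :=
  (Fintype.card V : ℝ) / 2 ≤ ((Vgood E G k t).card : ℝ)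

def CondG7 (E : V → V → Prop) [DecidableRel E] (G : GadgetSystem V I) (k t τ₁ : ℕ) : Prop :=
  ∀ u ∈ Vokay G,
    max ((10 : ℝ) ^ 11 * ((VbadP E G k t).card : ℝ)) (((τ₁ * k * t : ℕ) : ℝ) / 2)
      ≤ ((outN E u ∩ VgoodP E G k t).card : ℝ)

def CondG8 (E : V → V → Prop) [DecidableRel E] (G : GadgetSystem V I) (k t τ₁ : ℕ) : Prop :=
  ∀ u ∈ Vokay G,
    max ((10 : ℝ) ^ 11 * ((VbadM E G k t).card : ℝ)) (((τ₁ * k * t : ℕ) : ℝ) / 2)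
      ≤ ((inN E u ∩ Vgood E G k t).card : ℝ)

def CondG9 (E : V → V → Prop) [DecidableRel E] (G : GadgetSystem V I) (k t τ₁ : ℕ) : Prop :=
  ∀ u : V,
    max ((10 : ℝ) ^ 11 * (((Finset.univ \ Vokay G).card : ℕ) : ℝ)) (((τ₁ * k * t : ℕ) : ℝ) / 2)
      ≤ ((outN E u ∩ Vokay G).card : ℝ) ∧
    max ((10 : ℝ) ^ 11 * (((Finset.univ \ Vokay G).card : ℕ) : ℝ)) (((τ₁ * k * t : ℕ) : ℝ) / 2)
      ≤ ((inN E u ∩ Vokay G).card : ℝ)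

/-- Properties (G6)–(G9) of a gadget system. -/
def GadgetHyp2 (E : V → V → Prop) [DecidableRel E] (G : GadgetSystem V I) (k t τ₁ : ℕ) :
    Prop :=
  CondG6 E G k t ∧ CondG7 E G k t τ₁ ∧ CondG8 E G k t τ₁ ∧ CondG9 E G k t τ₁

/-! ### Available vertices -/

def AvailA1 (E : V → V → Prop) [DecidableRel E] (G : GadgetSystem V I) (k t : ℕ)
    (W : Finset V) (u : V) : Prop :=
  u ∈ Vgood E G k t ∩ W

def AvailA2 (E : V → V → Prop) [DecidableRel E] (G : GadgetSystem V I) (k t τ₂ : ℕ)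
    (W : Finset V) (u : V) : Prop :=
  u ∈ (VgoodP E G k t \ VgoodM E G k t) ∩ W ∧
    ManyIn (inN E u) ((τ₂ * k * t : ℕ) : ℝ) (AvailA1 E G k t W)

def AvailA3 (E : V → V → Prop) [DecidableRel E] (G : GadgetSystem V I) (k t τ₂ : ℕ)
    (W : Finset V) (u : V) : Prop :=
  u ∈ (VgoodM E G k t \ VgoodP E G k t) ∩ W ∧
    ManyIn (outN E u) ((τ₂ * k * t : ℕ) : ℝ)
      (fun v => AvailA1 E G k t W v ∨ AvailA2 E G k t τ₂ W v)

def AvailA4 (E : V → V → Prop) [DecidableRel E] (G : GadgetSystem V I) (k t τ₂ : ℕ)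
    (W : Finset V) (u : V) : Prop :=
  u ∈ Vbad E G k t ∩ W ∧
    ManyIn (outN E u) ((τ₂ * k * t : ℕ) : ℝ)
      (fun v => AvailA1 E G k t W v ∨ AvailA2 E G k t τ₂ W v) ∧
    ManyIn (inN E u) ((τ₂ * k * t : ℕ) : ℝ) (AvailA1 E G k t W)

/-- `u` is available (for `α`) with respect to a family `𝒜`, where `W = W(𝒜 ∖ {α})`. -/
def Available (E : V → V → Prop) [DecidableRel E] (G : GadgetSystem V I) (k t τ₂ : ℕ)
    (W : Finset V) (u : V) : Prop :=
  AvailA1 E G k t W u ∨ AvailA2 E G k t τ₂ W u ∨ AvailA3 E G k t τ₂ W u ∨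
    AvailA4 E G k t τ₂ W u

/-! ### Eligible and helpful vertices -/

/-- Indices `α ∈ 𝒜` such that `u` has no out-neighbour in `S⁻(α)`. -/
def MissOut (E : V → V → Prop) [DecidableRel E] (G : GadgetSystem V I) (𝒜 : Finset I)
    (u : V) : Finset I :=
  𝒜.filter fun α => ∀ v ∈ G.Sm α, ¬ E u v

/-- Indices `α ∈ 𝒜` such that `u` has no in-neighbour in `S⁺(α)`. -/
def MissIn (E : V → V → Prop) [DecidableRel E] (G : GadgetSystem V I) (𝒜 : Finset I)
    (u : V) : Finset I :=
  𝒜.filter fun α => ∀ v ∈ G.Sp α, ¬ E v u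

def Nice1 (E : V → V → Prop) [DecidableRel E] (G : GadgetSystem V I) (k t : ℕ)
    (𝒜 : Finset I) (W : Finset V) (u : V) : Prop :=
  u ∈ Vgood E G k t ∩ W ∧ (MissOut E G 𝒜 u).card ≤ k ∧ (MissIn E G 𝒜 u).card ≤ k

def Nice2 (E : V → V → Prop) [DecidableRel E] (G : GadgetSystem V I) (k t : ℕ) (m : ℝ)
    (𝒜 : Finset I) (W : Finset V) (u : V) : Prop :=
  u ∈ (VgoodP E G k t \ VgoodM E G k t) ∩ W ∧ (MissOut E G 𝒜 u).card ≤ k ∧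
    ManyIn (inN E u) m (Nice1 E G k t 𝒜 W)

def Nice3 (E : V → V → Prop) [DecidableRel E] (G : GadgetSystem V I) (k t : ℕ) (m : ℝ)
    (𝒜 : Finset I) (W : Finset V) (u : V) : Prop :=
  u ∈ (VgoodM E G k t \ VgoodP E G k t) ∩ W ∧ (MissIn E G 𝒜 u).card ≤ k ∧
    ManyIn (outN E u) m (fun v => Nice1 E G k t 𝒜 W v ∨ Nice2 E G k t m 𝒜 W v)

def Nice4 (E : V → V → Prop) [DecidableRel E] (G : GadgetSystem V I) (k t : ℕ) (m : ℝ)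
    (𝒜 : Finset I) (W : Finset V) (u : V) : Prop :=
  u ∈ Vbad E G k t ∩ W ∧
    ManyIn (inN E u) m (Nice1 E G k t 𝒜 W) ∧
    ManyIn (outN E u) m (fun v => Nice1 E G k t 𝒜 W v ∨ Nice2 E G k t m 𝒜 W v)

def NiceFor (E : V → V → Prop) [DecidableRel E] (G : GadgetSystem V I) (k t : ℕ) (m : ℝ)
    (𝒜 : Finset I) (W : Finset V) (u : V) : Prop :=
  Nice1 E G k t 𝒜 W u ∨ Nice2 E G k t m 𝒜 W u ∨ Nice3 E G k t m 𝒜 W u ∨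
    Nice4 E G k t m 𝒜 W u

/-- `u` is eligible for `𝒜` in `W`. -/
def Eligible (E : V → V → Prop) [DecidableRel E] (G : GadgetSystem V I) (k t τ₃ : ℕ)
    (𝒜 : Finset I) (W : Finset V) (u : V) : Prop :=
  NiceFor E G k t ((τ₃ * k * t : ℕ) : ℝ) 𝒜 W u

/-- `u` is helpful for `𝒜` in `W`. -/
def Helpful (E : V → V → Prop) [DecidableRel E] (G : GadgetSystem V I) (k t : ℕ)
    (𝒜 : Finset I) (W : Finset V) (u : V) : Prop :=
  NiceFor E G k t (k : ℝ) 𝒜 W u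

end Defs

noncomputable def phi0 (τ₁ : ℕ) : ℝ := (τ₁ : ℝ) / 4
noncomputable def phi1 (τ₁ : ℕ) : ℝ := phi0 τ₁ / (2 ^ 6 * (rho : ℝ))
noncomputable def phi2 (τ₁ : ℕ) : ℝ := phi1 τ₁ / (2 ^ 14 * (rho : ℝ) ^ 2)
noncomputable def phi3 (τ₁ : ℕ) : ℝ := phi2 τ₁ / (2 ^ 14 * (rho : ℝ) ^ 2)

lemma aux_pair_count {ι : Type*} [DecidableEq ι] (s : Finset ι) (r : ℕ) (hr : 2 ≤ r)
    {a b : ι} (hab : a ≠ b) (ha : a ∈ s) (hb : b ∈ s) :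
    ((s.powersetCard r).filter fun D => a ∈ D ∧ b ∈ D).card
      = (s.card - 2).choose (r - 2) := by
  classical
  have hbe : b ∈ s.erase a := Finset.mem_erase.mpr ⟨hab.symm, hb⟩
  have hee : #s - 1 - 1 = #s - 2 := by omega
  have hcard : (((s.erase a).erase b).powersetCard (r-2)).card
      = (s.card - 2).choose (r-2) := by
    rw [Finset.card_powersetCard, Finset.card_erase_of_mem hbe,
      Finset.card_erase_of_mem ha, hee]
  rw [← hcard]
  refine Finset.card_bij' (fun D _ => (D.erase a).erase b)
      (fun E _ => insert a (insert b E)) ?hi ?hj ?left ?right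
  case hi =>
    intro D hD
    simp only [Finset.mem_filter, Finset.mem_powersetCard] at hD
    obtain ⟨⟨hDs, hDc⟩, haD, hbD⟩ := hD
    simp only [Finset.mem_powersetCard]
    constructor
    · intro x hx
      simp only [Finset.mem_erase] at hx ⊢
      exact ⟨hx.1, hx.2.1, hDs hx.2.2⟩
    · rw [Finset.card_erase_of_mem (Finset.mem_erase.mpr ⟨hab.symm, hbD⟩),
        Finset.card_erase_of_mem haD, hDc]
      omega
  case hj =>
    intro E hE
    simp only [Finset.mem_powersetCard] at hE
    obtain ⟨hEs, hEc⟩ := hE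
    have haE : a ∉ E := fun h => (Finset.mem_erase.mp ((Finset.mem_erase.mp (hEs h)).2)).1 rfl
    have hbE : b ∉ E := fun h => (Finset.mem_erase.mp (hEs h)).1 rfl
    simp only [Finset.mem_filter, Finset.mem_powersetCard]
    refine ⟨⟨?_, ?_⟩, Finset.mem_insert_self _ _,
      Finset.mem_insert_of_mem (Finset.mem_insert_self _ _)⟩
    · intro x hx
      rcases Finset.mem_insert.mp hx with rfl | hx
      · exact ha
      rcases Finset.mem_insert.mp hx with rfl | hx
      · exact hb
      · exact Finset.mem_of_mem_erase (Finset.mem_of_mem_erase (hEs hx))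
    · rw [Finset.card_insert_of_notMem, Finset.card_insert_of_notMem hbE, hEc]
      · omega
      · simp only [Finset.mem_insert, not_or]
        exact ⟨hab, haE⟩
  case left =>
    intro D hD
    simp only [Finset.mem_filter, Finset.mem_powersetCard] at hD
    obtain ⟨⟨hDs, hDc⟩, haD, hbD⟩ := hD
    show insert a (insert b ((D.erase a).erase b)) = D
    rw [Finset.insert_erase (Finset.mem_erase.mpr ⟨hab.symm, hbD⟩), Finset.insert_erase haD]
  case right =>
    intro E hE
    simp only [Finset.mem_powersetCard] at hE
    obtain ⟨hEs, hEc⟩ := hE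
    have haE : a ∉ E := fun h => (Finset.mem_erase.mp ((Finset.mem_erase.mp (hEs h)).2)).1 rfl
    have hbE : b ∉ E := fun h => (Finset.mem_erase.mp (hEs h)).1 rfl
    have hane : a ∉ insert b E := by
      simp only [Finset.mem_insert, not_or]; exact ⟨hab, haE⟩
    show ((insert a (insert b E)).erase a).erase b = E
    rw [Finset.erase_insert hane, Finset.erase_insert hbE]

lemma aux_choose_identity (N r : ℕ) (hr : 2 ≤ r) (hrN : r ≤ N) :
    r * (r - 1) * N.choose r = N * ((N - 1) * (N - 2).choose (r - 2)) := by
  obtain ⟨r', rfl⟩ : ∃ r', r = r' + 2 := ⟨r - 2, by omega⟩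
  obtain ⟨N', rfl⟩ : ∃ N', N = N' + 2 := ⟨N - 2, by omega⟩
  have h1 := Nat.add_one_mul_choose_eq (N' + 1) (r' + 1)
  have h2 := Nat.add_one_mul_choose_eq N' r'
  have e1 : r' + 2 - 1 = r' + 1 := by omega
  have e2 : N' + 2 - 1 = N' + 1 := by omega
  have e3 : r' + 2 - 2 = r' := by omega
  have e4 : N' + 2 - 2 = N' := by omega
  rw [e1, e2, e3, e4]
  calc (r' + 2) * (r' + 1) * (N' + 2).choose (r' + 2)
      = (r' + 1) * ((N' + 2).choose (r' + 2) * (r' + 2)) := by ring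
    _ = (r' + 1) * ((N' + 1 + 1) * (N' + 1).choose (r' + 1)) := by rw [← h1]
    _ = (N' + 2) * ((N' + 1).choose (r' + 1) * (r' + 1)) := by ring
    _ = (N' + 2) * ((N' + 1) * N'.choose r') := by rw [← h2]

lemma aux_ite_sum_comm {β : Type*} (c : Prop) [Decidable c] (s : Finset β) (f : β → ℝ) :
    (if c then ∑ x ∈ s, f x else 0) = ∑ x ∈ s, if c then f x else 0 := by
  split_ifs <;> simp

set_option maxHeartbeats 2000000 in
/-- Lemma 4.9. -/
theorem statement10 :
    ∃ C : ℕ, ∀ (τ₁ k t : ℕ), C ≤ τ₁ → C * τ₁ ≤ k → 2 ≤ t →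
      ∀ (V : Type) [Fintype V] [DecidableEq V] (E : V → V → Prop) [DecidableRel E],
        IsTournament E → StronglyKConnected E (τ₁ * k * t) →
        ∀ G : GadgetSystem V (Fin (sigma1 * k * t)),
          GadgetHyp E G k t → GadgetHyp2 E G k t τ₁ →
          ∀ (D₁ : Finset (Fin (sigma1 * k * t))) (Ng : V → Finset V),
            (Ng = NgoodP E G k t ∨ Ng = NgoodM E G k t) →
            ∀ (θ₁ θ₂ : ℝ), θ₁ ≤ phi1 τ₁ → θ₂ = θ₁ / (2 ^ 7 * (rho : ℝ)) →
            ∀ M : Fin (sigma1 * k * t) → V → Bool → Finset V,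
              (∀ α ∈ D₁, ∀ s ∈ G.S α, ∀ ν : Bool,
                M α s ν ⊆ Vokay G ∧ θ₁ * k * t ≤ ((M α s ν).card : ℝ)) →
              ∃ D₂ : Finset (Fin (sigma1 * k * t)), D₂ ⊆ D₁ ∧
                (D₁.card : ℝ) / (36 * (rho : ℝ) ^ 2) ≤ (D₂.card : ℝ) ∧
                ∀ α ∈ D₂, ∀ s ∈ G.S α, ∀ ν : Bool,
                  ManyIn (M α s ν) (θ₂ * k * t)
                    (fun u => θ₂ * k * t ≤
                      ((Ng u ∩ Wof G (D₂.erase α)).card : ℝ)) := by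
  classical
  refine ⟨1, ?_⟩
  intro τ₁ k t hC1 hCk ht V _ _ E _ hT hconn G hG hG2 D₁ Ng hNg θ₁ θ₂ hθ₁ hθ₂f M hM
  have hτ1 : 1 ≤ τ₁ := hC1
  have hk1 : 1 ≤ k := le_trans hτ1 (by simpa using hCk)
  have hrho : ((rho : ℕ) : ℝ) = 10000 := by norm_num [rho]
  -- trivial case: θ₂ * k * t ≤ 0
  rcases le_or_gt (θ₂ * k * t) 0 with hneg | hpos
  · refine ⟨D₁, Finset.Subset.refl _, ?_, ?_⟩
    · rw [hrho, div_le_iff₀ (by norm_num)]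
      have h0 : (0:ℝ) ≤ (D₁.card:ℝ) := Nat.cast_nonneg _
      nlinarith
    · intro α hα s hs ν
      exact ⟨∅, Finset.empty_subset _, by simpa using hneg, by simp⟩
  -- basic positivity facts
  have hkR : (1:ℝ) ≤ (k:ℝ) := by exact_mod_cast hk1
  have htR : (2:ℝ) ≤ (t:ℝ) := by exact_mod_cast ht
  have hkpos : (0:ℝ) < (k:ℝ) := by linarith
  have htpos : (0:ℝ) < (t:ℝ) := by linarith
  have hktpos : (0:ℝ) < (k:ℝ) * (t:ℝ) := mul_pos hkpos htpos
  have hθ₂pos : 0 < θ₂ := by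
    by_contra h
    push_neg at h
    have h1 : θ₂ * (k:ℝ) ≤ 0 := mul_nonpos_of_nonpos_of_nonneg h (le_of_lt hkpos)
    have h2 : θ₂ * (k:ℝ) * (t:ℝ) ≤ 0 := mul_nonpos_of_nonpos_of_nonneg h1 (le_of_lt htpos)
    linarith
  have hθ₂eq : θ₂ = θ₁ / 1280000 := by rw [hθ₂f, hrho]; norm_num
  have hθ₁pos : 0 < θ₁ := by
    rw [hθ₂eq] at hθ₂pos
    linarith
  have hθ₂₁ : θ₂ ≤ θ₁ := by rw [hθ₂eq]; linarith
  have hφτ : phi1 τ₁ ≤ (τ₁:ℝ)/4 := by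
    unfold phi1 phi0
    rw [hrho]
    exact div_le_self (by positivity) (by norm_num)
  have hθ₂τ : θ₂ ≤ (τ₁:ℝ)/4 := le_trans hθ₂₁ (le_trans hθ₁ hφτ)
  have hτkt2 : (2:ℝ) ≤ ((τ₁*k*t : ℕ):ℝ) := by
    have h2 : 2 ≤ τ₁*k*t := by
      calc 2 = 1*1*2 := by norm_num
        _ ≤ τ₁*k*t := Nat.mul_le_mul (Nat.mul_le_mul hτ1 hk1) ht
    exact_mod_cast h2
  have hdeg : ∀ u ∈ Vokay G, ((τ₁*k*t:ℕ):ℝ)/2 ≤ ((Ng u).card:ℝ) := by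
    intro u hu
    rcases hNg with rfl | rfl
    · exact le_trans (le_max_right _ _) (hG2.2.1 u hu)
    · exact le_trans (le_max_right _ _) (hG2.2.2.1 u hu)
  have hθNg : ∀ u ∈ Vokay G, θ₂ * k * t ≤ ((Ng u).card:ℝ)/2 := by
    intro u hu
    have hc : ((τ₁*k*t:ℕ):ℝ) = (τ₁:ℝ)*k*t := by push_cast; ring
    have h1 : θ₂ * k * t ≤ ((τ₁*k*t:ℕ):ℝ)/4 := by
      rw [hc]
      have hkt : (0:ℝ) ≤ (k:ℝ)*(t:ℝ) := le_of_lt hktpos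
      calc θ₂*k*t = θ₂*((k:ℝ)*t) := by ring
        _ ≤ ((τ₁:ℝ)/4)*((k:ℝ)*t) := mul_le_mul_of_nonneg_right hθ₂τ hkt
        _ = (τ₁:ℝ)*k*t/4 := by ring
    linarith [hdeg u hu]
  have hNgpos : ∀ u ∈ Vokay G, (0:ℝ) < ((Ng u).card:ℝ) := by
    intro u hu
    have := hdeg u hu
    linarith
  have hθ₁ktpos : 0 < θ₁ * k * t := by positivity
  -- the uniform size m₀ and threshold c₀
  set m₀ : ℕ := max ⌈θ₁ * k * t⌉₊ 1 with hm₀def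
  have hθ₁m₀ : θ₁ * k * t ≤ (m₀:ℝ) := by
    refine le_trans (Nat.le_ceil _) ?_
    exact_mod_cast Nat.le_max_left _ _
  have hm₀1 : 1 ≤ m₀ := Nat.le_max_right _ _
  have hm₀1R : (1:ℝ) ≤ (m₀:ℝ) := by exact_mod_cast hm₀1
  have hθ₂m₀ : θ₂ * k * t ≤ (m₀:ℝ)/2 := by
    have he : θ₂*k*t = (θ₁*k*t)/1280000 := by rw [hθ₂eq]; ring
    rw [he]
    linarith
  set c₀ : ℝ := (m₀:ℝ) - θ₂*k*t with hc₀def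
  have hc₀half : (m₀:ℝ)/2 ≤ c₀ := by rw [hc₀def]; linarith
  have hc₀pos : 0 < c₀ := by linarith
  -- choose uniform-size subsets M'
  have hM'ex : ∀ (α : Fin (sigma1*k*t)) (s : V) (ν : Bool), ∃ M' : Finset V,
      M' ⊆ M α s ν ∧ (α ∈ D₁ → s ∈ G.S α → (M'.card = m₀ ∧ M' ⊆ Vokay G)) := by
    intro α s ν
    by_cases h : α ∈ D₁ ∧ s ∈ G.S α
    · obtain ⟨hsub, hcard⟩ := hM α h.1 s h.2 ν
      have hle : m₀ ≤ (M α s ν).card := by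
        apply max_le
        · exact Nat.ceil_le.mpr hcard
        · have hpos' : (0:ℝ) < ((M α s ν).card:ℝ) := lt_of_lt_of_le hθ₁ktpos hcard
          have : 0 < (M α s ν).card := by exact_mod_cast hpos'
          omega
      obtain ⟨M', hsub', hcard'⟩ := Finset.exists_subset_card_eq hle
      exact ⟨M', hsub', fun _ _ => ⟨hcard', hsub'.trans hsub⟩⟩
    · exact ⟨∅, Finset.empty_subset _, fun h1 h2 => absurd ⟨h1, h2⟩ h⟩
  choose M' hM'M hM'spec using hM'ex
  -- small case
  by_cases hNsmall : D₁.card ≤ 3600000000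
  · rcases D₁.eq_empty_or_nonempty with rfl | ⟨α₀, hα₀⟩
    · refine ⟨∅, Finset.Subset.refl _, by simp, by simp⟩
    · refine ⟨{α₀}, Finset.singleton_subset_iff.mpr hα₀, ?_, ?_⟩
      · rw [hrho, div_le_iff₀ (by norm_num)]
        simp only [Finset.card_singleton, Nat.cast_one, one_mul]
        calc (D₁.card:ℝ) ≤ 3600000000 := by exact_mod_cast hNsmall
          _ = 36*10000^2 := by norm_num
      · intro α hα s hs ν
        have hαα₀ : α = α₀ := Finset.mem_singleton.mp hα
        subst hαα₀
        obtain ⟨hsub, hcard⟩ := hM α hα₀ s hs ν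
        refine ⟨M α s ν, Finset.Subset.refl _, ?_, ?_⟩
        · have h1 : θ₂*k*t ≤ θ₁*k*t := by
            have := mul_le_mul_of_nonneg_right
              (mul_le_mul_of_nonneg_right hθ₂₁ (le_of_lt hkpos)) (le_of_lt htpos)
            linarith
          linarith
        · intro u hu
          have huo : u ∈ Vokay G := hsub hu
          have he : Finset.erase {α} α = (∅ : Finset (Fin (sigma1*k*t))) :=
            Finset.erase_singleton α
          rw [he]
          have hW : Wof G (∅ : Finset (Fin (sigma1*k*t))) = Finset.univ := by
            simp [Wof]
          rw [hW, Finset.inter_univ]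
          linarith [hθNg u huo, hNgpos u huo]
  -- main case
  push_neg at hNsmall
  set N : ℕ := D₁.card with hNdef
  set q : ℕ := N / 640000 with hqdef
  set r : ℕ := q + 1 with hrdef
  have hq640 : 640000 * q ≤ N ∧ N < 640000 * (q+1) := by
    constructor
    · omega
    · omega
  have hr2 : 2 ≤ r := by omega
  have hrN : r ≤ N := by omega
  have h16 : 160000 * (r-1) ≤ N - 1 := by omega
  set P : Finset (Finset (Fin (sigma1*k*t))) := D₁.powersetCard r with hPdef
  have hPcard : P.card = N.choose r := Finset.card_powersetCard _ _
  have hPne : P.Nonempty := Finset.powersetCard_nonempty.mpr hrN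
  set Kp : ℕ := (N-2).choose (r-2) with hKpdef
  set ubad : Fin (sigma1*k*t) → Finset (Fin (sigma1*k*t)) → V → Prop :=
    fun α D' u => ((Ng u ∩ Wof G (D'.erase α)).card : ℝ) < θ₂*k*t with hubaddef
  -- the per-vertex counting bound
  have hcount : ∀ α ∈ D₁, ∀ u ∈ Vokay G,
      ((P.filter fun D' => α ∈ D' ∧ ubad α D' u).card : ℝ) ≤ 2 * Kp := by
    intro α hα u hu
    set x := ((Ng u).card : ℝ) with hxdef
    set w : Fin (sigma1*k*t) → ℝ := fun β => ((Ng u ∩ G.U β).card : ℝ) with hwdef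
    have hw0 : ∀ β, 0 ≤ w β := fun β => Nat.cast_nonneg _
    have hstep1 : ∀ D' ∈ P.filter (fun D' => α ∈ D' ∧ ubad α D' u),
        x/2 ≤ ∑ β ∈ D'.erase α, w β := by
      intro D' hD'
      simp only [Finset.mem_filter] at hD'
      obtain ⟨hD'P, hαD', hbad⟩ := hD'
      set C := D'.erase α with hCdef
      have hsplit : Ng u ⊆ (Ng u ∩ Wof G C) ∪ (Ng u ∩ C.biUnion G.U) := by
        intro v hv
        by_cases hvb : v ∈ C.biUnion G.U
        · exact Finset.mem_union_right _ (Finset.mem_inter.mpr ⟨hv, hvb⟩)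
        · refine Finset.mem_union_left _ (Finset.mem_inter.mpr ⟨hv, ?_⟩)
          simp [Wof, hvb]
      have h1 : (Ng u).card ≤ (Ng u ∩ Wof G C).card + (Ng u ∩ C.biUnion G.U).card :=
        le_trans (Finset.card_le_card hsplit) (Finset.card_union_le _ _)
      have h2 : (Ng u ∩ C.biUnion G.U).card ≤ ∑ β ∈ C, (Ng u ∩ G.U β).card := by
        have heq : Ng u ∩ C.biUnion G.U = C.biUnion (fun β => Ng u ∩ G.U β) := by
          ext v
          simp only [Finset.mem_inter, Finset.mem_biUnion]
          tauto
        rw [heq]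
        exact Finset.card_biUnion_le
      have h3 : (Ng u).card ≤ (Ng u ∩ Wof G C).card + ∑ β ∈ C, (Ng u ∩ G.U β).card :=
        le_trans h1 (Nat.add_le_add_left h2 _)
      have hcast : x ≤ ((Ng u ∩ Wof G C).card:ℝ) + ∑ β ∈ C, w β := by
        rw [hxdef, hwdef]
        beta_reduce
        exact_mod_cast h3
      have hbad' : ((Ng u ∩ Wof G C).card:ℝ) < θ₂*k*t := hbad
      have := hθNg u hu
      linarith

    have hsum1 : (x/2) * ((P.filter fun D' => α ∈ D' ∧ ubad α D' u).card : ℝ)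
        ≤ ∑ D' ∈ P.filter (fun D' => α ∈ D'), ∑ β ∈ D'.erase α, w β := by
      calc (x/2) * ((P.filter fun D' => α ∈ D' ∧ ubad α D' u).card : ℝ)
          = ∑ _D' ∈ P.filter (fun D' => α ∈ D' ∧ ubad α D' u), x/2 := by
            rw [Finset.sum_const, nsmul_eq_mul]; ring
        _ ≤ ∑ D' ∈ P.filter (fun D' => α ∈ D' ∧ ubad α D' u), ∑ β ∈ D'.erase α, w β :=
            Finset.sum_le_sum hstep1
        _ ≤ ∑ D' ∈ P.filter (fun D' => α ∈ D'), ∑ β ∈ D'.erase α, w β := by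
            apply Finset.sum_le_sum_of_subset_of_nonneg
            · intro D hD
              simp only [Finset.mem_filter] at hD ⊢
              exact ⟨hD.1, hD.2.1⟩
            · intro i _ _
              exact Finset.sum_nonneg (fun β _ => hw0 β)
    have hswap : ∑ D' ∈ P.filter (fun D' => α ∈ D'), ∑ β ∈ D'.erase α, w β
        = ∑ β ∈ D₁.erase α, w β * (((P.filter fun D' => α ∈ D' ∧ β ∈ D')).card : ℝ) := by
      have hinner : ∀ D' ∈ P.filter (fun D' => α ∈ D'),
          ∑ β ∈ D'.erase α, w β = ∑ β ∈ D₁.erase α, if β ∈ D' then w β else 0 := by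
        intro D' hD'
        simp only [Finset.mem_filter, hPdef, Finset.mem_powersetCard] at hD'
        have hsub : D' ⊆ D₁ := hD'.1.1
        have heq : D'.erase α = (D₁.erase α).filter (fun β => β ∈ D') := by
          ext β
          simp only [Finset.mem_erase, Finset.mem_filter]
          constructor
          · rintro ⟨h1, h2⟩; exact ⟨⟨h1, hsub h2⟩, h2⟩
          · rintro ⟨⟨h1, _⟩, h2⟩; exact ⟨h1, h2⟩
        rw [heq, Finset.sum_filter]
      rw [Finset.sum_congr rfl hinner, Finset.sum_comm]
      refine Finset.sum_congr rfl ?_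
      intro β hβ
      rw [Finset.sum_ite, Finset.sum_const_zero, Finset.sum_const, add_zero,
        nsmul_eq_mul, Finset.filter_filter, mul_comm]
    have hpair : ∀ β ∈ D₁.erase α, ((P.filter fun D' => α ∈ D' ∧ β ∈ D').card) = Kp := by
      intro β hβ
      obtain ⟨hβα, hβ₁⟩ := Finset.mem_erase.mp hβ
      exact aux_pair_count D₁ r hr2 hβα.symm hα hβ₁
    have hdisjsum : ∑ β ∈ D₁.erase α, w β ≤ x := by
      have hcardb : ((D₁.erase α).biUnion (fun β => Ng u ∩ G.U β)).card
          = ∑ β ∈ D₁.erase α, (Ng u ∩ G.U β).card := by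
        apply Finset.card_biUnion
        intro β hβ γ hγ hne
        exact Finset.disjoint_of_subset_left Finset.inter_subset_right
          (Finset.disjoint_of_subset_right Finset.inter_subset_right (hG.1 β γ hne))
      have hsubb : (D₁.erase α).biUnion (fun β => Ng u ∩ G.U β) ⊆ Ng u :=
        Finset.biUnion_subset.mpr (fun β _ => Finset.inter_subset_left)
      have h := Finset.card_le_card hsubb
      rw [hcardb] at h
      rw [hxdef, hwdef]
      beta_reduce
      exact_mod_cast h
    have hfinal : (x/2) * ((P.filter fun D' => α ∈ D' ∧ ubad α D' u).card : ℝ)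
        ≤ (Kp:ℝ) * x := by
      calc (x/2) * ((P.filter fun D' => α ∈ D' ∧ ubad α D' u).card : ℝ)
          ≤ ∑ D' ∈ P.filter (fun D' => α ∈ D'), ∑ β ∈ D'.erase α, w β := hsum1
        _ = ∑ β ∈ D₁.erase α, w β * (((P.filter fun D' => α ∈ D' ∧ β ∈ D')).card : ℝ) := hswap
        _ = ∑ β ∈ D₁.erase α, w β * (Kp:ℝ) := by
            refine Finset.sum_congr rfl ?_
            intro β hβ
            rw [hpair β hβ]
        _ = (∑ β ∈ D₁.erase α, w β) * (Kp:ℝ) := by rw [← Finset.sum_mul]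
        _ ≤ x * (Kp:ℝ) := mul_le_mul_of_nonneg_right hdisjsum (Nat.cast_nonneg _)
        _ = (Kp:ℝ) * x := mul_comm _ _
    have hx0 : 0 < x := hNgpos u hu
    by_contra hcon
    push_neg at hcon
    have h5 : (x/2) * (2*(Kp:ℝ))
        < (x/2) * ((P.filter fun D' => α ∈ D' ∧ ubad α D' u).card : ℝ) :=
      mul_lt_mul_of_pos_left hcon (by linarith)
    have h6 : (Kp:ℝ) * x = (x/2) * (2*(Kp:ℝ)) := by ring
    linarith
  -- the notion of a good index for a given D'
  set Good : Fin (sigma1*k*t) → Finset (Fin (sigma1*k*t)) → Prop := fun α D' =>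
    ∀ s ∈ G.S α, ∀ ν : Bool,
      θ₂*k*t ≤ (((M' α s ν).filter fun u => ¬ ubad α D' u).card : ℝ) with hGooddef
  have hstepA : ∀ D' ∈ P, c₀ * ((D'.filter fun α => ¬ Good α D').card : ℝ)
      ≤ ∑ α ∈ D₁, if α ∈ D' then
          (∑ s ∈ G.S α, ∑ ν : Bool,
            (((M' α s ν).filter fun u => ubad α D' u).card : ℝ)) else 0 := by
    intro D' hD'
    have hD'sub : D' ⊆ D₁ := (Finset.mem_powersetCard.mp hD').1
    have hbadlb : ∀ α ∈ D'.filter (fun α => ¬ Good α D'),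
        c₀ ≤ ∑ s ∈ G.S α, ∑ ν : Bool,
          (((M' α s ν).filter fun u => ubad α D' u).card : ℝ) := by
      intro α hαf
      simp only [Finset.mem_filter] at hαf
      obtain ⟨hαD', hnG⟩ := hαf
      simp only [hGooddef] at hnG
      push_neg at hnG
      obtain ⟨s, hs, ν, hlt⟩ := hnG
      have hαD₁ : α ∈ D₁ := hD'sub hαD'
      obtain ⟨hm₀c, hVok⟩ := hM'spec α s ν hαD₁ hs
      have hadd : ((M' α s ν).filter fun u => ubad α D' u).card
          + ((M' α s ν).filter fun u => ¬ ubad α D' u).card = m₀ := by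
        rw [← hm₀c]
        exact Finset.card_filter_add_card_filter_not _
      have hcastadd : (((M' α s ν).filter fun u => ubad α D' u).card : ℝ)
          + (((M' α s ν).filter fun u => ¬ ubad α D' u).card : ℝ) = (m₀:ℝ) := by
        exact_mod_cast hadd
      have h1 : c₀ ≤ (((M' α s ν).filter fun u => ubad α D' u).card : ℝ) := by
        rw [hc₀def]
        linarith
      calc c₀ ≤ (((M' α s ν).filter fun u => ubad α D' u).card : ℝ) := h1
        _ ≤ ∑ ν' : Bool, (((M' α s ν').filter fun u => ubad α D' u).card : ℝ) :=
            Finset.single_le_sum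
              (f := fun ν' => (((M' α s ν').filter fun u => ubad α D' u).card : ℝ))
              (fun _ _ => Nat.cast_nonneg _) (Finset.mem_univ ν)
        _ ≤ ∑ s' ∈ G.S α, ∑ ν' : Bool,
              (((M' α s' ν').filter fun u => ubad α D' u).card : ℝ) :=
            Finset.single_le_sum
              (f := fun s' => ∑ ν' : Bool,
                (((M' α s' ν').filter fun u => ubad α D' u).card : ℝ))
              (fun s' _ => Finset.sum_nonneg fun _ _ => Nat.cast_nonneg _) hs
    calc c₀ * ((D'.filter fun α => ¬ Good α D').card : ℝ)
        = ∑ α ∈ D'.filter (fun α => ¬ Good α D'), c₀ := by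
          rw [Finset.sum_const, nsmul_eq_mul, mul_comm]
      _ ≤ ∑ α ∈ D'.filter (fun α => ¬ Good α D'),
            ∑ s ∈ G.S α, ∑ ν : Bool,
              (((M' α s ν).filter fun u => ubad α D' u).card : ℝ) :=
          Finset.sum_le_sum hbadlb
      _ ≤ ∑ α ∈ D', ∑ s ∈ G.S α, ∑ ν : Bool,
            (((M' α s ν).filter fun u => ubad α D' u).card : ℝ) := by
          apply Finset.sum_le_sum_of_subset_of_nonneg (Finset.filter_subset _ _)
          intro i _ _
          exact Finset.sum_nonneg fun _ _ => Finset.sum_nonneg fun _ _ => Nat.cast_nonneg _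
      _ = ∑ α ∈ D₁, if α ∈ D' then
            (∑ s ∈ G.S α, ∑ ν : Bool,
              (((M' α s ν).filter fun u => ubad α D' u).card : ℝ)) else 0 := by
          rw [Finset.sum_ite_mem, Finset.inter_eq_right.mpr hD'sub]
  have hbadcS : ∀ (α : Fin (sigma1*k*t)) (s : V) (ν : Bool)
      (D' : Finset (Fin (sigma1*k*t))),
      (((M' α s ν).filter fun u => ubad α D' u).card : ℝ)
        = ∑ u ∈ M' α s ν, if ubad α D' u then (1:ℝ) else 0 := by
    intro α s ν D'
    rw [Finset.sum_boole]
  have hswap2 : ∀ α ∈ D₁,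
      (∑ D' ∈ P, if α ∈ D' then
        (∑ s ∈ G.S α, ∑ ν : Bool,
          (((M' α s ν).filter fun u => ubad α D' u).card : ℝ)) else 0)
      = ∑ s ∈ G.S α, ∑ ν : Bool, ∑ u ∈ M' α s ν,
          ((P.filter fun D' => α ∈ D' ∧ ubad α D' u).card : ℝ) := by
    intro α hα
    calc (∑ D' ∈ P, if α ∈ D' then
            (∑ s ∈ G.S α, ∑ ν : Bool,
              (((M' α s ν).filter fun u => ubad α D' u).card : ℝ)) else 0)
        = ∑ D' ∈ P, ∑ s ∈ G.S α, ∑ ν : Bool, ∑ u ∈ M' α s ν,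
            (if α ∈ D' ∧ ubad α D' u then (1:ℝ) else 0) := by
          refine Finset.sum_congr rfl ?_
          intro D' _
          rw [aux_ite_sum_comm]
          refine Finset.sum_congr rfl ?_
          intro s _
          rw [aux_ite_sum_comm]
          refine Finset.sum_congr rfl ?_
          intro ν _
          rw [hbadcS, aux_ite_sum_comm]
          refine Finset.sum_congr rfl ?_
          intro u _
          by_cases h1 : α ∈ D' <;> by_cases h2 : ubad α D' u <;> simp [h1, h2]
      _ = ∑ s ∈ G.S α, ∑ ν : Bool, ∑ u ∈ M' α s ν, ∑ D' ∈ P,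
            (if α ∈ D' ∧ ubad α D' u then (1:ℝ) else 0) := by
          rw [Finset.sum_comm]
          refine Finset.sum_congr rfl ?_
          intro s _
          rw [Finset.sum_comm]
          refine Finset.sum_congr rfl ?_
          intro ν _
          rw [Finset.sum_comm]
      _ = ∑ s ∈ G.S α, ∑ ν : Bool, ∑ u ∈ M' α s ν,
            ((P.filter fun D' => α ∈ D' ∧ ubad α D' u).card : ℝ) := by
          refine Finset.sum_congr rfl fun s _ => Finset.sum_congr rfl fun ν _ =>
            Finset.sum_congr rfl fun u _ => ?_
          rw [Finset.sum_boole]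
  have hbound3 : ∀ α ∈ D₁,
      (∑ s ∈ G.S α, ∑ ν : Bool, ∑ u ∈ M' α s ν,
          ((P.filter fun D' => α ∈ D' ∧ ubad α D' u).card : ℝ))
        ≤ (rho:ℝ) * (2 * ((m₀:ℝ) * (2*(Kp:ℝ)))) := by
    intro α hα
    have hν : ∀ s ∈ G.S α, ∀ ν : Bool,
        (∑ u ∈ M' α s ν, ((P.filter fun D' => α ∈ D' ∧ ubad α D' u).card : ℝ))
          ≤ (m₀:ℝ) * (2*(Kp:ℝ)) := by
      intro s hs ν
      obtain ⟨hm₀c, hVok⟩ := hM'spec α s ν hα hs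
      calc (∑ u ∈ M' α s ν, ((P.filter fun D' => α ∈ D' ∧ ubad α D' u).card : ℝ))
          ≤ ∑ u ∈ M' α s ν, 2*(Kp:ℝ) :=
            Finset.sum_le_sum (fun u hu => hcount α hα u (hVok hu))
        _ = (m₀:ℝ) * (2*(Kp:ℝ)) := by rw [Finset.sum_const, hm₀c, nsmul_eq_mul]
    have hsb : ∀ s ∈ G.S α,
        (∑ ν : Bool, ∑ u ∈ M' α s ν,
          ((P.filter fun D' => α ∈ D' ∧ ubad α D' u).card : ℝ))
          ≤ 2 * ((m₀:ℝ) * (2*(Kp:ℝ))) := by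
      intro s hs
      calc (∑ ν : Bool, ∑ u ∈ M' α s ν,
              ((P.filter fun D' => α ∈ D' ∧ ubad α D' u).card : ℝ))
          ≤ ∑ _ν : Bool, (m₀:ℝ)*(2*(Kp:ℝ)) :=
            Finset.sum_le_sum (fun ν _ => hν s hs ν)
        _ = 2 * ((m₀:ℝ)*(2*(Kp:ℝ))) := by
            rw [Finset.sum_const, Finset.card_univ, Fintype.card_bool, nsmul_eq_mul]
            norm_num
    calc (∑ s ∈ G.S α, ∑ ν : Bool, ∑ u ∈ M' α s ν,
            ((P.filter fun D' => α ∈ D' ∧ ubad α D' u).card : ℝ))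
        ≤ ∑ s ∈ G.S α, 2*((m₀:ℝ)*(2*(Kp:ℝ))) := Finset.sum_le_sum hsb
      _ = ((G.S α).card : ℝ) * (2*((m₀:ℝ)*(2*(Kp:ℝ)))) := by
          rw [Finset.sum_const, nsmul_eq_mul]
      _ ≤ (rho:ℝ) * (2*((m₀:ℝ)*(2*(Kp:ℝ)))) := by
          apply mul_le_mul_of_nonneg_right
          · exact_mod_cast (hG.2.1 α).1
          · exact mul_nonneg (by norm_num)
              (mul_nonneg (Nat.cast_nonneg _) (mul_nonneg (by norm_num) (Nat.cast_nonneg _)))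
  have htot : ∑ D' ∈ P, ((D'.filter fun α => ¬ Good α D').card : ℝ)
      ≤ ∑ _D' ∈ P, (r:ℝ)/2 := by
    have h1 : c₀ * ∑ D' ∈ P, ((D'.filter fun α => ¬ Good α D').card : ℝ)
        ≤ (N:ℝ) * ((rho:ℝ) * (2 * ((m₀:ℝ) * (2*(Kp:ℝ))))) := by
      rw [Finset.mul_sum]
      calc ∑ D' ∈ P, c₀ * ((D'.filter fun α => ¬ Good α D').card : ℝ)
          ≤ ∑ D' ∈ P, ∑ α ∈ D₁, (if α ∈ D' then
              (∑ s ∈ G.S α, ∑ ν : Bool,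
                (((M' α s ν).filter fun u => ubad α D' u).card : ℝ)) else 0) :=
            Finset.sum_le_sum hstepA
        _ = ∑ α ∈ D₁, ∑ D' ∈ P, (if α ∈ D' then
              (∑ s ∈ G.S α, ∑ ν : Bool,
                (((M' α s ν).filter fun u => ubad α D' u).card : ℝ)) else 0) :=
            Finset.sum_comm
        _ = ∑ α ∈ D₁, ∑ s ∈ G.S α, ∑ ν : Bool, ∑ u ∈ M' α s ν,
              ((P.filter fun D' => α ∈ D' ∧ ubad α D' u).card : ℝ) :=
            Finset.sum_congr rfl hswap2
        _ ≤ ∑ _α ∈ D₁, (rho:ℝ) * (2 * ((m₀:ℝ) * (2*(Kp:ℝ)))) := Finset.sum_le_sum hbound3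
        _ = (N:ℝ) * ((rho:ℝ) * (2 * ((m₀:ℝ) * (2*(Kp:ℝ))))) := by
            rw [Finset.sum_const, nsmul_eq_mul]
    have hm₀2c₀ : (m₀:ℝ) ≤ 2*c₀ := by rw [hc₀def]; linarith
    have h2 : (N:ℝ) * ((rho:ℝ) * (2 * ((m₀:ℝ) * (2*(Kp:ℝ)))))
        ≤ c₀ * ((N:ℝ) * (8*(rho:ℝ)*(Kp:ℝ))) := by
      have hnn : (0:ℝ) ≤ 4*(N:ℝ)*(rho:ℝ)*(Kp:ℝ) := by positivity
      have h2a := mul_le_mul_of_nonneg_right hm₀2c₀ hnn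
      calc (N:ℝ) * ((rho:ℝ) * (2 * ((m₀:ℝ) * (2*(Kp:ℝ)))))
          = (m₀:ℝ) * (4*(N:ℝ)*(rho:ℝ)*(Kp:ℝ)) := by ring
        _ ≤ (2*c₀) * (4*(N:ℝ)*(rho:ℝ)*(Kp:ℝ)) := h2a
        _ = c₀ * ((N:ℝ) * (8*(rho:ℝ)*(Kp:ℝ))) := by ring
    have h3 : ∑ D' ∈ P, ((D'.filter fun α => ¬ Good α D').card : ℝ)
        ≤ (N:ℝ) * (8*(rho:ℝ)*(Kp:ℝ)) :=
      le_of_mul_le_mul_left (le_trans h1 h2) hc₀pos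
    have hNat : 160000 * N * Kp ≤ r * N.choose r := by
      have hid := aux_choose_identity N r hr2 hrN
      have hmul : (160000 * N * Kp) * (r-1) ≤ (r * N.choose r) * (r-1) := by
        calc (160000*N*Kp)*(r-1) = (160000*(r-1))*(N*Kp) := by ring
          _ ≤ (N-1)*(N*Kp) := Nat.mul_le_mul_right _ h16
          _ = N*((N-1)*Kp) := by ring
          _ = r*(r-1)*N.choose r := by rw [hKpdef]; exact hid.symm
          _ = (r*N.choose r)*(r-1) := by ring
      exact Nat.le_of_mul_le_mul_right hmul (by omega)
    have h4 : (N:ℝ)*(8*(rho:ℝ)*(Kp:ℝ)) ≤ ((r:ℝ)/2) * (P.card:ℝ) := by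
      have hcastle : ((160000*N*Kp : ℕ):ℝ) ≤ ((r*N.choose r : ℕ):ℝ) := Nat.cast_le.mpr hNat
      push_cast at hcastle
      rw [hPcard, hrho]
      push_cast
      linarith
    calc ∑ D' ∈ P, ((D'.filter fun α => ¬ Good α D').card : ℝ)
        ≤ (N:ℝ)*(8*(rho:ℝ)*(Kp:ℝ)) := h3
      _ ≤ ((r:ℝ)/2) * (P.card:ℝ) := h4
      _ = ∑ _D' ∈ P, (r:ℝ)/2 := by rw [Finset.sum_const, nsmul_eq_mul]; ring
  obtain ⟨D', hD'P, hD'B⟩ := Finset.exists_le_of_sum_le hPne htot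
  obtain ⟨hD'sub, hD'card⟩ := Finset.mem_powersetCard.mp hD'P
  refine ⟨D'.filter (fun α => Good α D'), (Finset.filter_subset _ _).trans hD'sub, ?_, ?_⟩
  · have hsplitc : (D'.filter fun α => Good α D').card
        + (D'.filter fun α => ¬ Good α D').card = r := by
      rw [← hD'card]
      exact Finset.card_filter_add_card_filter_not _
    have hcastc : ((D'.filter fun α => Good α D').card:ℝ)
        + ((D'.filter fun α => ¬ Good α D').card:ℝ) = (r:ℝ) := by exact_mod_cast hsplitc
    have hNr : (N:ℝ) ≤ 640000*(r:ℝ) := by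
      have hNn : N ≤ 640000*r := by omega
      exact_mod_cast hNn
    rw [hrho]
    have hcnn : (0:ℝ) ≤ ((D'.filter fun α => Good α D').card:ℝ) := Nat.cast_nonneg _
    rw [div_le_iff₀ (by norm_num)]
    linarith
  · intro α hα s hs ν
    obtain ⟨hαD', hαGood⟩ := Finset.mem_filter.mp hα
    have hαD₁ : α ∈ D₁ := hD'sub hαD'
    refine ⟨(M' α s ν).filter (fun u => ¬ ubad α D' u),
      (Finset.filter_subset _ _).trans (hM'M α s ν), hαGood s hs ν, ?_⟩
    intro u hu
    obtain ⟨huM', hnotbad⟩ := Finset.mem_filter.mp hu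
    simp only [hubaddef] at hnotbad
    rw [not_lt] at hnotbad
    have hsubW : Wof G (D'.erase α) ⊆ Wof G ((D'.filter fun α => Good α D').erase α) := by
      unfold Wof
      apply Finset.sdiff_subset_sdiff (Finset.Subset.refl _)
      exact Finset.biUnion_subset_biUnion_of_subset_left _
        (Finset.erase_subset_erase _ (Finset.filter_subset _ _))
    have hmono : (Ng u ∩ Wof G (D'.erase α)).card
        ≤ (Ng u ∩ Wof G ((D'.filter fun α => Good α D').erase α)).card :=
      Finset.card_le_card (Finset.inter_subset_inter (Finset.Subset.refl _) hsubW)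
    calc θ₂*(k:ℝ)*(t:ℝ) ≤ ((Ng u ∩ Wof G (D'.erase α)).card:ℝ) := hnotbad
      _ ≤ _ := by exact_mod_cast hmono


end TournamentPartition
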